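/- Let n ≥ 2 and let f(x,y) = f₀xⁿ + ⋯ + f_nyⁿ be a binary form of degree n over ℂ with f₀ ≠ 0 and f(x,1) separable of degree n. Then the set of pairs (A,B) of n×n complex symmetric matrices with (−1)^{n(n−1)/2}·det(xA − yB) = f(x,y) is nonempty, and SL_n(ℂ) acts transitively on this set via g·(A,B) = (gAgᵀ, gBgᵀ). -/

import Mathlib

open Polynomial Matrix

noncomputable def binForm {n : ℕ} {R : Type*} [CommRing R] (f : Fin (n+1) → R) :
    MvPolynomial (Fin 2) R :=
  ∑ i : Fin (n+1), MvPolynomial.C (f i) * MvPolynomial.X 0 ^ (n - (i:ℕ)) * MvPolynomial.X 1 ^ (i:ℕ)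

noncomputable def pencilDisc {m : Type*} [Fintype m] [DecidableEq m] {R : Type*} [CommRing R]
    (A B : Matrix m m R) : MvPolynomial (Fin 2) R :=
  (-1) ^ (Fintype.card m * (Fintype.card m - 1) / 2) *
    Matrix.det (Matrix.of fun i j =>
      MvPolynomial.X (0 : Fin 2) * MvPolynomial.C (A i j) - MvPolynomial.X (1 : Fin 2) * MvPolynomial.C (B i j))

noncomputable def fxOne {n : ℕ} {R : Type*} [CommRing R] (f : Fin (n+1) → R) : R[X] :=
  ∑ i : Fin (n+1), C (f i) * X ^ (n - (i:ℕ))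

noncomputable abbrev Lf {n : ℕ} {K : Type*} [Field K] (f : Fin (n+1) → K) :=
  AdjoinRoot (C (f 0)⁻¹ * fxOne f)

namespace Stmt5Aux

lemma degree_fin2 (d : Fin 2 →₀ ℕ) : d.degree = d 0 + d 1 := by
  rw [Finsupp.degree, ← Fin.sum_univ_two (f := fun i => d i)]
  exact Finset.sum_subset (Finset.subset_univ _) (by
    intro x _ hx
    simpa using (Finsupp.notMem_support_iff).mp hx)

lemma CXX_eq_monomial (c : ℂ) (a b : ℕ) :
    MvPolynomial.C c * MvPolynomial.X (0:Fin 2) ^ a * MvPolynomial.X 1 ^ b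
      = MvPolynomial.monomial (Finsupp.single 0 a + Finsupp.single 1 b) c := by
  rw [MvPolynomial.X_pow_eq_monomial, MvPolynomial.X_pow_eq_monomial, MvPolynomial.C_apply,
    MvPolynomial.monomial_mul, MvPolynomial.monomial_mul]
  simp

lemma exists_binForm_of_isHomogeneous {n : ℕ} {p : MvPolynomial (Fin 2) ℂ}
    (hp : p.IsHomogeneous n) : ∃ g : Fin (n+1) → ℂ, binForm g = p := by
  refine ⟨fun i => MvPolynomial.coeff (Finsupp.single 0 (n - (i:ℕ)) + Finsupp.single 1 (i:ℕ)) p, ?_⟩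
  apply MvPolynomial.ext
  intro m
  rw [binForm, MvPolynomial.coeff_sum]
  simp only [CXX_eq_monomial, MvPolynomial.coeff_monomial]
  by_cases hm : m 0 + m 1 = n
  · have hm1 : (m 1 : ℕ) ≤ n := by omega
    set i₀ : Fin (n+1) := ⟨m 1, by omega⟩ with hi₀
    have hσ : Finsupp.single (0:Fin 2) (n - (i₀:ℕ)) + Finsupp.single 1 (i₀:ℕ) = m := by
      ext x
      fin_cases x <;> simp [Finsupp.single_apply, hi₀] <;> omega
    rw [Finset.sum_eq_single i₀]
    · rw [if_pos hσ, hσ]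
    · intro j _ hj
      rw [if_neg]
      intro hc
      apply hj
      have : (j : ℕ) = m 1 := by
        have := DFunLike.congr_fun hc 1
        simpa [Finsupp.single_apply] using this
      exact Fin.ext (by simp [hi₀, this])
    · intro h; exact absurd (Finset.mem_univ i₀) h
  · have hz : MvPolynomial.coeff m p = 0 := by
      apply hp.coeff_eq_zero
      rw [degree_fin2]; exact hm
    rw [hz]
    apply Finset.sum_eq_zero
    intro j _
    rw [if_neg]
    intro hc
    apply hm
    have h0 := DFunLike.congr_fun hc 0
    have h1 := DFunLike.congr_fun hc 1
    simp [Finsupp.single_apply] at h0 h1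
    have := Fin.is_le j
    omega


lemma aeval_binForm {n : ℕ} (g : Fin (n+1) → ℂ) :
    MvPolynomial.aeval ![(X : ℂ[X]), 1] (binForm g) = fxOne g := by
  rw [binForm, fxOne, map_sum]
  refine Finset.sum_congr rfl fun i _ => ?_
  simp [MvPolynomial.algebraMap_eq, Polynomial.algebraMap_eq]

lemma aeval_pencilDisc {n : ℕ} (A B : Matrix (Fin n) (Fin n) ℂ) :
    MvPolynomial.aeval ![(X : ℂ[X]), 1] (pencilDisc A B)
      = (-1 : ℂ[X]) ^ (n * (n-1) / 2) *
        (Matrix.of fun i j => (X : ℂ[X]) * C (A i j) - C (B i j)).det := by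
  rw [pencilDisc, _root_.map_mul, map_pow, map_neg, _root_.map_one]
  rw [Fintype.card_fin]
  congr 1
  rw [AlgHom.map_det]
  congr 1
  ext i j
  simp [Polynomial.algebraMap_eq]

lemma eval10_binForm {n : ℕ} (hn : 1 ≤ n) (g : Fin (n+1) → ℂ) :
    MvPolynomial.eval ![(1 : ℂ), 0] (binForm g) = g 0 := by
  rw [binForm, map_sum]
  rw [Finset.sum_eq_single (0 : Fin (n+1))]
  · simp
  · intro j _ hj
    have hj' : (j : ℕ) ≠ 0 := fun h => hj (Fin.ext h)
    simp [zero_pow hj']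
  · simp

lemma eval10_pencilDisc {n : ℕ} (A B : Matrix (Fin n) (Fin n) ℂ) :
    MvPolynomial.eval ![(1 : ℂ), 0] (pencilDisc A B)
      = (-1 : ℂ) ^ (n * (n-1) / 2) * A.det := by
  rw [pencilDisc, _root_.map_mul, map_pow, map_neg, _root_.map_one, Fintype.card_fin]
  congr 1
  rw [RingHom.map_det]
  congr 1
  ext i j
  simp

lemma fxOne_coeff {n : ℕ} (g : Fin (n+1) → ℂ) (i : Fin (n+1)) :
    (fxOne g).coeff (n - (i:ℕ)) = g i := by
  rw [fxOne, finset_sum_coeff]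
  rw [Finset.sum_eq_single i]
  · simp
  · intro j _ hj
    have h1 : (j : ℕ) ≤ n := Fin.is_le j
    have h2 : (i : ℕ) ≤ n := Fin.is_le i
    have : n - (j : ℕ) ≠ n - (i : ℕ) := by
      intro h
      exact hj (Fin.ext (by omega))
    simp only [coeff_C_mul, coeff_X_pow]
    rw [if_neg (fun h => this h.symm)]
    simp
  · simp

lemma fxOne_inj {n : ℕ} {g g' : Fin (n+1) → ℂ} (h : fxOne g = fxOne g') : g = g' := by
  funext i
  rw [← fxOne_coeff g i, ← fxOne_coeff g' i, h]


lemma pencilDisc_isHomogeneous {n : ℕ} (A B : Matrix (Fin n) (Fin n) ℂ) :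
    (pencilDisc A B).IsHomogeneous n := by
  rw [pencilDisc]
  have h1 : ((-1 : MvPolynomial (Fin 2) ℂ) ^ (Fintype.card (Fin n) * (Fintype.card (Fin n) - 1) / 2)).IsHomogeneous 0 := by
    have : ((-1 : MvPolynomial (Fin 2) ℂ) ^ (Fintype.card (Fin n) * (Fintype.card (Fin n) - 1) / 2))
        = MvPolynomial.C ((-1 : ℂ) ^ (Fintype.card (Fin n) * (Fintype.card (Fin n) - 1) / 2)) := by
      rw [map_pow, map_neg, _root_.map_one]
    rw [this]
    exact MvPolynomial.isHomogeneous_C _ _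
  have h2 : (Matrix.det (Matrix.of fun i j =>
      MvPolynomial.X (0 : Fin 2) * MvPolynomial.C (A i j) -
        MvPolynomial.X (1 : Fin 2) * MvPolynomial.C (B i j))).IsHomogeneous n := by
    rw [Matrix.det_apply']
    apply MvPolynomial.IsHomogeneous.sum
    intro σ _
    have hε : (Equiv.Perm.sign σ : MvPolynomial (Fin 2) ℂ) =
        MvPolynomial.C ((Equiv.Perm.sign σ : ℤ) : ℂ) := by
      push_cast
      simp
    rw [hε]
    have hprod : (∏ i, (Matrix.of fun i j =>
        MvPolynomial.X (0 : Fin 2) * MvPolynomial.C (A i j) -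
          MvPolynomial.X (1 : Fin 2) * MvPolynomial.C (B i j)) (σ i) i).IsHomogeneous n := by
      have := MvPolynomial.IsHomogeneous.prod (σ := Fin 2) (R := ℂ) Finset.univ
        (fun i => (Matrix.of fun i j =>
          MvPolynomial.X (0 : Fin 2) * MvPolynomial.C (A i j) -
            MvPolynomial.X (1 : Fin 2) * MvPolynomial.C (B i j)) (σ i) i) (fun _ => 1)
        (fun i _ => by
          simp only [Matrix.of_apply]
          have ha : (MvPolynomial.X (0 : Fin 2) * MvPolynomial.C (A (σ i) i)).IsHomogeneous 1 := by
            simpa using (MvPolynomial.isHomogeneous_X ℂ (0 : Fin 2)).mul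
              (MvPolynomial.isHomogeneous_C _ (A (σ i) i))
          have hb : (MvPolynomial.X (1 : Fin 2) * MvPolynomial.C (B (σ i) i)).IsHomogeneous 1 := by
            simpa using (MvPolynomial.isHomogeneous_X ℂ (1 : Fin 2)).mul
              (MvPolynomial.isHomogeneous_C _ (B (σ i) i))
          exact ha.sub hb)
      simpa using this
    simpa using (MvPolynomial.isHomogeneous_C (Fin 2) (((Equiv.Perm.sign σ : ℤ) : ℂ))).mul hprod
  simpa using h1.mul h2


lemma exists_rho {n : ℕ} (f : Fin (n+1) → ℂ) (hf0 : f 0 ≠ 0)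
    (hsep : (fxOne f).Separable) (hdeg : (fxOne f).natDegree = n) :
    ∃ ρ : Fin n → ℂ, Function.Injective ρ ∧
      fxOne f = C (f 0) * ∏ i : Fin n, (X - C (ρ i)) := by
  set p := C (f 0)⁻¹ * fxOne f with hp
  have hf0' : (f 0)⁻¹ ≠ 0 := inv_ne_zero hf0
  have hfx_ne : fxOne f ≠ 0 := by
    intro h
    have := fxOne_coeff f 0
    rw [h] at this
    simp at this
    exact hf0 this.symm
  have hpdeg : p.natDegree = n := by
    rw [hp, natDegree_C_mul hf0', hdeg]
  have hmonic : p.Monic := by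
    unfold Polynomial.Monic
    rw [Polynomial.leadingCoeff, hpdeg, hp, coeff_C_mul]
    have : (fxOne f).coeff n = f 0 := by
      have := fxOne_coeff f 0
      simpa using this
    rw [this, inv_mul_cancel₀ hf0]
  have hsplits : p.Splits := IsAlgClosed.splits p
  have hcard : p.roots.card = n := by
    rw [← hpdeg, ← Polynomial.splits_iff_card_roots.mp hsplits]
  have hnodup : p.roots.Nodup := by
    apply Polynomial.nodup_roots
    rw [hp]
    refine ((separable_C _).mpr (isUnit_iff_ne_zero.mpr hf0')).mul hsep ?_
    exact ⟨C (f 0), 0, by rw [← _root_.map_mul, mul_inv_cancel₀ hf0]; simp⟩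
  have hprod : p = (p.roots.map fun a => X - C a).prod :=
    hsplits.eq_prod_roots_of_monic hmonic
  set L := p.roots.toList with hLdef
  have hL : (L : Multiset ℂ) = p.roots := Multiset.coe_toList _
  have hlen : L.length = n := by
    rw [← hcard, ← hL]; rfl
  have hnodupL : L.Nodup := by
    rw [← Multiset.coe_nodup, hL]; exact hnodup
  refine ⟨fun i => L.get (Fin.cast hlen.symm i), ?_, ?_⟩
  · intro i j hij
    have := (List.nodup_iff_injective_get).mp hnodupL hij
    exact Fin.ext (by simpa using congrArg Fin.val this)
  · have hofn : List.ofFn (fun i : Fin n => (X : ℂ[X]) - C (L.get (Fin.cast hlen.symm i)))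
        = L.map (fun a => X - C a) := by
      apply List.ext_getElem
      · simp [hlen]
      · intro k h1 h2
        simp [List.getElem_ofFn, List.getElem_map]
    calc fxOne f = C (f 0) * p := by
          rw [hp, ← mul_assoc, ← _root_.map_mul, mul_inv_cancel₀ hf0]; simp
      _ = C (f 0) * ∏ i : Fin n, (X - C (L.get (Fin.cast hlen.symm i))) := by
          congr 1
          rw [hprod, ← hL, Multiset.map_coe, Multiset.prod_coe, ← hofn, List.prod_ofFn]



lemma neg_one_pow_sq {R : Type*} [CommRing R] (s : ℕ) : ((-1 : R) ^ s) * ((-1 : R) ^ s) = 1 := by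
  rw [← mul_pow]; simp

/-- the matrix factorization over ℂ[X] -/
lemma pencil_matrix_factor {n : ℕ} (A B : Matrix (Fin n) (Fin n) ℂ) (hA : IsUnit A.det) :
    (Matrix.of fun i j => (X : ℂ[X]) * C (A i j) - C (B i j))
      = A.map (C : ℂ → ℂ[X]) * charmatrix (A⁻¹ * B) := by
  have hAM : A * (A⁻¹ * B) = B := mul_nonsing_inv_cancel_left A B hA
  apply Matrix.ext
  intro i j
  rw [Matrix.mul_apply]
  simp only [charmatrix_apply, Matrix.map_apply, Matrix.of_apply]
  simp_rw [mul_sub]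
  rw [Finset.sum_sub_distrib]
  congr 1
  · rw [Finset.sum_eq_single j]
    · rw [Matrix.diagonal_apply_eq]; ring
    · intro k _ hk
      rw [Matrix.diagonal_apply_ne _ hk, mul_zero]
    · intro h; exact absurd (Finset.mem_univ j) h
  · simp_rw [← C_mul]
    rw [← map_sum (C : ℂ →+* ℂ[X]) _ Finset.univ]
    congr 1
    rw [← Matrix.mul_apply, hAM]

lemma key {n : ℕ} (hn : 1 ≤ n) (f : Fin (n+1) → ℂ) (hf0 : f 0 ≠ 0)
    (A B : Matrix (Fin n) (Fin n) ℂ) (hAB : pencilDisc A B = binForm f) :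
    A.det = (-1 : ℂ) ^ (n*(n-1)/2) * f 0 ∧
      C (f 0) * (A⁻¹ * B).charpoly = fxOne f := by
  have hdet : A.det = (-1 : ℂ) ^ (n*(n-1)/2) * f 0 := by
    have h := congrArg (MvPolynomial.eval ![(1 : ℂ), 0]) hAB
    rw [eval10_pencilDisc, eval10_binForm hn] at h
    calc A.det = (-1:ℂ)^(n*(n-1)/2) * ((-1:ℂ)^(n*(n-1)/2) * A.det) := by
          rw [← mul_assoc, neg_one_pow_sq, one_mul]
      _ = (-1 : ℂ) ^ (n*(n-1)/2) * f 0 := by rw [h]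
  refine ⟨hdet, ?_⟩
  have hA : IsUnit A.det := by
    rw [hdet]; exact (isUnit_iff_ne_zero.mpr (by
      intro h
      rcases mul_eq_zero.mp h with h | h
      · exact (by positivity : (0:ℝ) < 1) |>.ne' (by simpa using congrArg norm h)
      · exact hf0 h))
  have h := congrArg (MvPolynomial.aeval ![(X : ℂ[X]), 1]) hAB
  rw [aeval_pencilDisc, aeval_binForm, pencil_matrix_factor A B hA, det_mul] at h
  have hmapdet : (A.map (C : ℂ → ℂ[X])).det = C A.det := by
    rw [RingHom.map_det (C : ℂ →+* ℂ[X]) A, RingHom.mapMatrix_apply]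
  have hcp : (charmatrix (A⁻¹ * B)).det = (A⁻¹ * B).charpoly := rfl
  rw [hmapdet, hcp, hdet] at h
  have hC : ((-1 : ℂ[X]) ^ (n*(n-1)/2)) * C ((-1:ℂ)^(n*(n-1)/2) * f 0) = C (f 0) := by
    rw [C_mul, ← mul_assoc]
    have : C ((-1:ℂ)^(n*(n-1)/2)) = ((-1 : ℂ[X]) ^ (n*(n-1)/2)) := by
      rw [map_pow, map_neg, _root_.map_one]
    rw [this, neg_one_pow_sq, one_mul]
  rw [← hC]
  rw [mul_assoc]
  exact h


lemma exists_eigenvector {n : ℕ} (M : Matrix (Fin n) (Fin n) ℂ) (r : ℂ)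
    (hr : (M.charpoly).eval r = 0) : ∃ v : Fin n → ℂ, v ≠ 0 ∧ M *ᵥ v = r • v := by
  have hdet : (r • (1 : Matrix (Fin n) (Fin n) ℂ) - M).det = 0 := by
    have hmap : (charmatrix M).map (Polynomial.eval r) = r • (1 : Matrix (Fin n) (Fin n) ℂ) - M := by
      ext i j
      by_cases h : i = j
      · subst h; simp [charmatrix_apply]
      · simp [charmatrix_apply, Matrix.diagonal_apply_ne _ h, Matrix.one_apply_ne h]
    have := RingHom.map_det (Polynomial.evalRingHom r) (charmatrix M)
    rw [RingHom.mapMatrix_apply] at this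
    have h2 : (Polynomial.evalRingHom r) (charmatrix M).det = (M.charpoly).eval r := rfl
    rw [h2, hr] at this
    rw [← hmap]
    have : ((charmatrix M).map (Polynomial.evalRingHom r)).det = 0 := this.symm
    convert this using 2
    rfl
  obtain ⟨v, hv0, hv⟩ := (Matrix.exists_mulVec_eq_zero_iff).mpr hdet
  refine ⟨v, hv0, ?_⟩
  have := hv
  rw [Matrix.sub_mulVec, Matrix.smul_mulVec, Matrix.one_mulVec, sub_eq_zero] at this
  exact this.symm

lemma to_canonical {n : ℕ} (hn : 2 ≤ n) (f : Fin (n+1) → ℂ) (hf0 : f 0 ≠ 0)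
    (ρ : Fin n → ℂ) (hρinj : Function.Injective ρ)
    (hfact : fxOne f = C (f 0) * ∏ i : Fin n, (X - C (ρ i)))
    (d : Fin n → ℂ) (hd : ∀ i, d i ≠ 0)
    (hdprod : ∏ i, d i = (-1 : ℂ) ^ (n*(n-1)/2) * f 0)
    (A B : Matrix (Fin n) (Fin n) ℂ) (hAs : A.IsSymm) (hBs : B.IsSymm)
    (hAB : pencilDisc A B = binForm f) :
    ∃ g : Matrix (Fin n) (Fin n) ℂ, g.det = 1 ∧
      A = g * diagonal d * gᵀ ∧ B = g * diagonal (fun i => d i * ρ i) * gᵀ := by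
  obtain ⟨hdet, hcpf⟩ := key (by omega) f hf0 A B hAB
  have hdA : A.det ≠ 0 := by
    rw [hdet]
    apply mul_ne_zero _ hf0
    apply pow_ne_zero
    exact neg_ne_zero.mpr one_ne_zero
  have hA : IsUnit A.det := isUnit_iff_ne_zero.mpr hdA
  set M := A⁻¹ * B with hM
  have hcp : M.charpoly = ∏ i : Fin n, (X - C (ρ i)) := by
    apply mul_left_cancel₀ (show (C (f 0) : ℂ[X]) ≠ 0 from fun h => hf0 (by simpa using h))
    rw [hcpf, hfact]
  -- eigenvectors
  have hev : ∀ i : Fin n, ∃ v : Fin n → ℂ, v ≠ 0 ∧ M *ᵥ v = ρ i • v := by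
    intro i
    apply exists_eigenvector
    rw [hcp, Polynomial.eval_prod]
    apply Finset.prod_eq_zero (Finset.mem_univ i)
    simp
  choose v hv0 hv using hev
  -- linear independence
  have hli : LinearIndependent ℂ v := by
    apply Module.End.eigenvectors_linearIndependent' (Matrix.mulVecLin M) ρ hρinj v
    intro i
    constructor
    · rw [Module.End.mem_eigenspace_iff, Matrix.mulVecLin_apply]
      exact hv i
    · exact hv0 i
  set g0 : Matrix (Fin n) (Fin n) ℂ := Matrix.of fun i j => v j i with hg0
  have hg0unit : IsUnit g0 := by
    rw [← Matrix.linearIndependent_cols_iff_isUnit]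
    have : g0.col = v := by
      funext i
      rfl
    rw [this]
    exact hli
  have hg0detU : IsUnit g0.det := (Matrix.isUnit_iff_isUnit_det g0).mp hg0unit
  have hg0det : g0.det ≠ 0 := hg0detU.ne_zero
  -- M * g0 = g0 * diagonal ρ
  have hMg : M * g0 = g0 * diagonal ρ := by
    ext i j
    rw [Matrix.mul_apply, Matrix.mul_diagonal]
    have := congrFun (hv j) i
    simp only [Matrix.mulVec, dotProduct, Pi.smul_apply, smul_eq_mul] at this
    rw [hg0]
    simpa [mul_comm] using this
  have hAM : A * M = B := mul_nonsing_inv_cancel_left A B hA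
  have hBg : B * g0 = A * g0 * diagonal ρ := by
    rw [← hAM, mul_assoc, hMg, mul_assoc]
  set S := g0ᵀ * A * g0 with hS
  have hSsymm : Sᵀ = S := by
    rw [hS, Matrix.transpose_mul, Matrix.transpose_mul, Matrix.transpose_transpose, hAs.eq,
      mul_assoc]
  have hT : g0ᵀ * B * g0 = S * diagonal ρ := by
    rw [mul_assoc, hBg, hS]
    noncomm_ring
  have hTsymm : (S * diagonal ρ)ᵀ = S * diagonal ρ := by
    rw [← hT, Matrix.transpose_mul, Matrix.transpose_mul, Matrix.transpose_transpose, hBs.eq,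
      mul_assoc]
  have hSoff : ∀ i j, i ≠ j → S i j = 0 := by
    intro i j hij
    have h1 := congrFun (congrFun hTsymm i) j
    rw [Matrix.transpose_apply, Matrix.mul_diagonal, Matrix.mul_diagonal] at h1
    have h2 : S j i = S i j := by
      rw [← congrFun (congrFun hSsymm j) i, Matrix.transpose_apply]
    rw [h2] at h1
    by_contra hne
    exact hij (hρinj (mul_left_cancel₀ hne h1))
  set c : Fin n → ℂ := fun i => S i i with hc
  have hSdiag : S = diagonal c := by
    ext i j
    by_cases h : i = j
    · subst h; rw [Matrix.diagonal_apply_eq]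
    · rw [Matrix.diagonal_apply_ne _ h]; exact hSoff i j h
  have hcne : ∀ i, c i ≠ 0 := by
    have hdS : S.det ≠ 0 := by
      rw [hS, Matrix.det_mul, Matrix.det_mul, Matrix.det_transpose]
      exact mul_ne_zero (mul_ne_zero hg0det hdA) hg0det
    rw [hSdiag, Matrix.det_diagonal] at hdS
    exact fun i => Finset.prod_ne_zero_iff.mp hdS i (Finset.mem_univ i)
  -- choose square roots
  have hsq : ∀ i : Fin n, ∃ s : ℂ, s ^ 2 = d i * (c i)⁻¹ :=
    fun i => IsAlgClosed.exists_pow_nat_eq _ (by norm_num)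
  choose s hs using hsq
  have hsne : ∀ i, s i ≠ 0 := by
    intro i h
    have h2 := hs i
    rw [h] at h2
    have hne : d i * (c i)⁻¹ ≠ 0 := mul_ne_zero (hd i) (inv_ne_zero (hcne i))
    exact hne (by simpa using h2.symm)
  have main : ∀ ε : Fin n → ℂ, (∀ i, ε i * ε i = 1) →
      ((g0 * diagonal (fun i => ε i * s i))ᵀ * A * (g0 * diagonal (fun i => ε i * s i)) = diagonal d ∧
       (g0 * diagonal (fun i => ε i * s i))ᵀ * B * (g0 * diagonal (fun i => ε i * s i))
          = diagonal (fun i => d i * ρ i)) := by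
    intro ε hε
    set w : Fin n → ℂ := fun i => ε i * s i with hw
    have hwsq : ∀ i, w i * w i = d i * (c i)⁻¹ := by
      intro i
      have h1 : w i * w i = (ε i * ε i) * (s i * s i) := by rw [hw]; ring
      rw [h1, hε i, one_mul, ← sq, hs i]
    have htr : (g0 * diagonal w)ᵀ = diagonal w * g0ᵀ := by
      rw [Matrix.transpose_mul, Matrix.diagonal_transpose]
    constructor
    · calc (g0 * diagonal w)ᵀ * A * (g0 * diagonal w)
          = diagonal w * (g0ᵀ * A * g0) * diagonal w := by rw [htr]; noncomm_ring
        _ = diagonal w * diagonal c * diagonal w := by rw [← hS, hSdiag]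
        _ = diagonal d := by
            rw [Matrix.diagonal_mul_diagonal, Matrix.diagonal_mul_diagonal]
            apply congrArg Matrix.diagonal
            funext i
            calc w i * c i * w i = (w i * w i) * c i := by ring
              _ = d i * (c i)⁻¹ * c i := by rw [hwsq i]
              _ = d i := by
                  rw [mul_assoc, inv_mul_cancel₀ (hcne i), mul_one]
    · calc (g0 * diagonal w)ᵀ * B * (g0 * diagonal w)
          = diagonal w * (g0ᵀ * B * g0) * diagonal w := by rw [htr]; noncomm_ring
        _ = diagonal w * (diagonal c * diagonal ρ) * diagonal w := by rw [hT, hSdiag]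
        _ = diagonal (fun i => d i * ρ i) := by
            rw [Matrix.diagonal_mul_diagonal, Matrix.diagonal_mul_diagonal,
              Matrix.diagonal_mul_diagonal]
            apply congrArg Matrix.diagonal
            funext i
            calc w i * (c i * ρ i) * w i = (w i * w i) * c i * ρ i := by ring
              _ = d i * (c i)⁻¹ * c i * ρ i := by rw [hwsq i]
              _ = d i * ρ i := by
                  rw [mul_assoc, mul_assoc, ← mul_assoc (c i)⁻¹, inv_mul_cancel₀ (hcne i), one_mul]
  set δ : ℂ := g0.det * ∏ i, s i with hδ
  have hdetg1 : ∀ ε : Fin n → ℂ, (g0 * diagonal (fun i => ε i * s i)).det = δ * ∏ i, ε i := by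
    intro ε
    rw [Matrix.det_mul, Matrix.det_diagonal, Finset.prod_mul_distrib, hδ]
    ring
  have hδsq : δ * δ = 1 := by
    have h1 := (main (fun _ => (1:ℂ)) (fun i => by norm_num)).1
    have h2 := congrArg Matrix.det h1
    rw [Matrix.det_mul, Matrix.det_mul, Matrix.det_transpose, Matrix.det_diagonal, hdprod,
      ← hdet, hdetg1 (fun _ => (1:ℂ))] at h2
    simp only [Finset.prod_const_one, mul_one] at h2
    -- h2 : δ * A.det * δ = A.det
    have h3 : δ * δ * A.det = 1 * A.det := by rw [one_mul]; linear_combination h2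
    exact mul_right_cancel₀ hdA h3
  have hδpm : δ = 1 ∨ δ = -1 := mul_self_eq_one_iff.mp hδsq
  obtain ⟨ε, hε, hεdet⟩ : ∃ ε : Fin n → ℂ, (∀ i, ε i * ε i = 1) ∧ δ * ∏ i, ε i = 1 := by
    rcases hδpm with h | h
    · exact ⟨fun _ => 1, fun i => by norm_num, by simp [h]⟩
    · refine ⟨fun i => if i = (⟨0, by omega⟩ : Fin n) then -1 else 1, fun i => ?_, ?_⟩
      · by_cases hi : i = (⟨0, by omega⟩ : Fin n) <;> simp [hi]
      · rw [Finset.prod_ite_eq' Finset.univ (⟨0, by omega⟩ : Fin n) (fun _ => (-1 : ℂ))]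
        simp [h]
  set g1 := g0 * diagonal (fun i => ε i * s i) with hg1
  obtain ⟨hA1, hB1⟩ := main ε hε
  have hg1det : g1.det = 1 := by rw [hg1, hdetg1 ε]; exact hεdet
  have hg1T : IsUnit g1ᵀ.det := by rw [Matrix.det_transpose, hg1det]; exact isUnit_one
  have hg1U : IsUnit g1.det := by rw [hg1det]; exact isUnit_one
  refine ⟨(g1ᵀ)⁻¹, ?_, ?_, ?_⟩
  · rw [Matrix.det_nonsing_inv, Matrix.det_transpose, hg1det]
    simp
  · calc A = ((g1ᵀ)⁻¹ * g1ᵀ) * A * (g1 * g1⁻¹) := by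
          rw [Matrix.nonsing_inv_mul _ hg1T, Matrix.mul_nonsing_inv _ hg1U, one_mul, mul_one]
      _ = (g1ᵀ)⁻¹ * (g1ᵀ * A * g1) * g1⁻¹ := by noncomm_ring
      _ = (g1ᵀ)⁻¹ * diagonal d * g1⁻¹ := by rw [hA1]
      _ = (g1ᵀ)⁻¹ * diagonal d * ((g1ᵀ)⁻¹)ᵀ := by
          rw [Matrix.transpose_nonsing_inv, Matrix.transpose_transpose]
  · calc B = ((g1ᵀ)⁻¹ * g1ᵀ) * B * (g1 * g1⁻¹) := by
          rw [Matrix.nonsing_inv_mul _ hg1T, Matrix.mul_nonsing_inv _ hg1U, one_mul, mul_one]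
      _ = (g1ᵀ)⁻¹ * (g1ᵀ * B * g1) * g1⁻¹ := by noncomm_ring
      _ = (g1ᵀ)⁻¹ * diagonal (fun i => d i * ρ i) * g1⁻¹ := by rw [hB1]
      _ = (g1ᵀ)⁻¹ * diagonal (fun i => d i * ρ i) * ((g1ᵀ)⁻¹)ᵀ := by
          rw [Matrix.transpose_nonsing_inv, Matrix.transpose_transpose]

lemma pencil_canonical {n : ℕ} (f : Fin (n+1) → ℂ) (hf0 : f 0 ≠ 0)
    (ρ : Fin n → ℂ)
    (hfact : fxOne f = C (f 0) * ∏ i : Fin n, (X - C (ρ i)))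
    (d : Fin n → ℂ)
    (hdprod : ∏ i, d i = (-1 : ℂ) ^ (n*(n-1)/2) * f 0) :
    pencilDisc (diagonal d) (diagonal fun i => d i * ρ i) = binForm f := by
  obtain ⟨g, hg⟩ := exists_binForm_of_isHomogeneous
    (pencilDisc_isHomogeneous (diagonal d) (diagonal fun i => d i * ρ i))
  rw [← hg]
  have hgf : g = f := by
    apply fxOne_inj
    rw [← aeval_binForm g, hg, aeval_pencilDisc]
    have hmat : (Matrix.of fun i j => (X : ℂ[X]) * C (diagonal d i j)
        - C (diagonal (fun i => d i * ρ i) i j))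
        = diagonal (fun i => C (d i) * (X - C (ρ i))) := by
      ext i j
      by_cases h : i = j
      · subst h
        simp only [Matrix.of_apply, Matrix.diagonal_apply_eq]
        rw [C_mul]
        ring
      · simp [Matrix.diagonal_apply_ne _ h]
    rw [hmat, Matrix.det_diagonal, Finset.prod_mul_distrib, ← map_prod (C : ℂ →+* ℂ[X]), hdprod]
    rw [hfact]
    rw [C_mul, ← mul_assoc]
    congr 1
    have h1 : (C ((-1:ℂ) ^ (n*(n-1)/2)) : ℂ[X]) = ((-1 : ℂ[X]) ^ (n*(n-1)/2)) := by
      rw [map_pow, map_neg, _root_.map_one]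
    rw [h1, ← mul_assoc, neg_one_pow_sq, one_mul]
  rw [hgf]

end Stmt5Aux

theorem stmt5 (n : ℕ) (hn : 2 ≤ n) (f : Fin (n+1) → ℂ) (hf0 : f 0 ≠ 0)
    (hsep : (fxOne f).Separable) (hdeg : (fxOne f).natDegree = n) :
    (∃ A B : Matrix (Fin n) (Fin n) ℂ, A.IsSymm ∧ B.IsSymm ∧ pencilDisc A B = binForm f) ∧
    (∀ A B A' B' : Matrix (Fin n) (Fin n) ℂ,
      A.IsSymm → B.IsSymm → pencilDisc A B = binForm f →
      A'.IsSymm → B'.IsSymm → pencilDisc A' B' = binForm f →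
      ∃ γ : Matrix.SpecialLinearGroup (Fin n) ℂ,
        A' = (γ : Matrix (Fin n) (Fin n) ℂ) * A * (γ : Matrix (Fin n) (Fin n) ℂ)ᵀ ∧
        B' = (γ : Matrix (Fin n) (Fin n) ℂ) * B * (γ : Matrix (Fin n) (Fin n) ℂ)ᵀ) := by
  obtain ⟨ρ, hρinj, hfact⟩ := Stmt5Aux.exists_rho f hf0 hsep hdeg
  set i₀ : Fin n := ⟨0, by omega⟩ with hi₀
  set d : Fin n → ℂ := fun i => if i = i₀ then (-1:ℂ)^(n*(n-1)/2) * f 0 else 1 with hd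
  have hu : (-1:ℂ)^(n*(n-1)/2) * f 0 ≠ 0 :=
    mul_ne_zero (pow_ne_zero _ (neg_ne_zero.mpr one_ne_zero)) hf0
  have hdne : ∀ i, d i ≠ 0 := by
    intro i
    rw [hd]
    by_cases h : i = i₀ <;> simp [h, hu]
  have hdprod : ∏ i, d i = (-1:ℂ)^(n*(n-1)/2) * f 0 := by
    rw [hd, Finset.prod_ite_eq' Finset.univ i₀ (fun _ => (-1:ℂ)^(n*(n-1)/2) * f 0)]
    simp
  constructor
  · exact ⟨diagonal d, diagonal (fun i => d i * ρ i), Matrix.isSymm_diagonal d,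
      Matrix.isSymm_diagonal _, Stmt5Aux.pencil_canonical f hf0 ρ hfact d hdprod⟩
  · intro A B A' B' hAs hBs hAB hAs' hBs' hAB'
    obtain ⟨g, hgdet, hgA, hgB⟩ :=
      Stmt5Aux.to_canonical hn f hf0 ρ hρinj hfact d hdne hdprod A B hAs hBs hAB
    obtain ⟨g', hgdet', hgA', hgB'⟩ :=
      Stmt5Aux.to_canonical hn f hf0 ρ hρinj hfact d hdne hdprod A' B' hAs' hBs' hAB'
    have hgU : IsUnit g.det := by rw [hgdet]; exact isUnit_one
    have hgT : IsUnit gᵀ.det := by rw [Matrix.det_transpose, hgdet]; exact isUnit_one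
    have hγdet : (g' * g⁻¹).det = 1 := by
      rw [Matrix.det_mul, hgdet', Matrix.det_nonsing_inv, hgdet, Ring.inverse_one, one_mul]
    refine ⟨⟨g' * g⁻¹, hγdet⟩, ?_, ?_⟩
    · have hD : diagonal d = g⁻¹ * A * (g⁻¹)ᵀ := by
        rw [hgA, Matrix.transpose_nonsing_inv, mul_assoc g (diagonal d) gᵀ,
          Matrix.nonsing_inv_mul_cancel_left _ _ hgU,
          Matrix.mul_nonsing_inv_cancel_right _ _ hgT]
      show A' = (g' * g⁻¹) * A * (g' * g⁻¹)ᵀ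
      rw [Matrix.transpose_mul, hgA', hD]
      noncomm_ring
    · have hD : diagonal (fun i => d i * ρ i) = g⁻¹ * B * (g⁻¹)ᵀ := by
        rw [hgB, Matrix.transpose_nonsing_inv, mul_assoc g _ gᵀ,
          Matrix.nonsing_inv_mul_cancel_left _ _ hgU,
          Matrix.mul_nonsing_inv_cancel_right _ _ hgT]
      show B' = (g' * g⁻¹) * B * (g' * g⁻¹)ᵀ
      rw [Matrix.transpose_mul, hgB', hD]
      noncomm_ring
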